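/- (Convex-concave property under the paper's sign assumptions.) Suppose W_{ij} ≥ 0 for all i, j, and for all i: 0 ≤ w⁰_i ≤ 1, θ_i ≥ 0, and z⁰_i ∈ [−1, 1]. Fix nodes α, β, γ, δ and budgets k_g, k_b > 0, and define g(k₁, l₁) = F(k₁ e_α, (k_g − k₁) e_β, l₁ e_γ, (k_b − l₁) e_δ). Then for every fixed l₁, the function k₁ ↦ g(k₁, l₁) is concave on ℝ, and for every fixed k₁, the function l₁ ↦ g(k₁, l₁) is convex on ℝ. -/

import Mathlib

open scoped NNReal

section NeumannAux

attribute [local instance] Matrix.linftyOpNormedRing Matrix.linftyOpNormedAddCommGroup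
  Matrix.linftyOpNormedSpace

/-- Auxiliary: entries of `(1 - W)⁻¹` are nonnegative when `W` is entrywise nonnegative
with row sums of absolute values below 1 (Neumann series argument). -/
theorem aux_inv_one_sub_entry_nonneg (n : ℕ) (W : Matrix (Fin n) (Fin n) ℝ)
    (hW : ∀ i, ∑ j, |W i j| < 1) (hWnonneg : ∀ i j, 0 ≤ W i j) :
    ∀ j i, 0 ≤ (1 - W)⁻¹ j i := by
  have hpow : ∀ (k : ℕ) (a bb : Fin n), 0 ≤ (W ^ k) a bb := by
    intro k
    induction k with
    | zero => intro a bb; rw [pow_zero, Matrix.one_apply]; split <;> norm_num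
    | succ m ih =>
      intro a bb
      rw [pow_succ, Matrix.mul_apply]
      exact Finset.sum_nonneg fun l _ => mul_nonneg (ih a l) (hWnonneg l bb)
  have hnorm : ‖W‖ < 1 := by
    rw [Matrix.linfty_opNorm_def]
    rw [show ((1:ℝ)) = ((1:ℝ≥0):ℝ) by simp]
    rw [NNReal.coe_lt_coe]
    refine Finset.sup_lt_iff (by norm_num) |>.2 fun i _ => ?_
    rw [← NNReal.coe_lt_coe]
    push_cast
    simpa [Real.norm_eq_abs] using hW i
  have hsum : Summable (fun k : ℕ => W ^ k) := summable_geometric_of_norm_lt_one hnorm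
  have h1 : (1 - W) * (∑' k : ℕ, W ^ k) = 1 := mul_neg_geom_series W hnorm
  have hΔ : (1 - W)⁻¹ = ∑' k : ℕ, W ^ k := Matrix.inv_eq_right_inv h1
  intro j i
  rw [hΔ]
  set L : Matrix (Fin n) (Fin n) ℝ →L[ℝ] ℝ :=
    LinearMap.mkContinuous
      { toFun := fun A => A j i, map_add' := fun _ _ => rfl, map_smul' := fun _ _ => rfl } 1
      (fun A => by
        rw [one_mul]
        show ‖A j i‖ ≤ ‖A‖
        have h : ‖A j i‖₊ ≤ ‖A‖₊ := by
          rw [Matrix.linfty_opNNNorm_def]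
          exact le_trans (Finset.single_le_sum (f := fun k => ‖A j k‖₊)
            (fun _ _ => zero_le) (Finset.mem_univ i))
            (Finset.le_sup (f := fun a => ∑ k : Fin n, ‖A a k‖₊) (Finset.mem_univ j))
        exact_mod_cast h)
    with hL
  have hHS : HasSum (fun k : ℕ => (W ^ k) j i) ((∑' k : ℕ, W ^ k) j i) := hsum.hasSum.mapL L
  exact hHS.nonneg fun k => hpow k j i

end NeumannAux

/-- Auxiliary: a quadratic with nonpositive leading coefficient is concave on `ℝ`. -/
theorem aux_concaveOn_quadratic {A B C : ℝ} (hA : A ≤ 0) :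
    ConcaveOn ℝ Set.univ (fun x => A * x ^ 2 + B * x + C) := by
  refine ⟨convex_univ, fun x _ y _ a bb ha hb hab => ?_⟩
  simp only [smul_eq_mul]
  have hbb : bb = 1 - a := by linarith
  subst hbb
  nlinarith [mul_nonpos_of_nonpos_of_nonneg hA
    (mul_nonneg (mul_nonneg ha hb) (sq_nonneg (x - y)))]

/-- Auxiliary: a quadratic with nonnegative leading coefficient is convex on `ℝ`. -/
theorem aux_convexOn_quadratic {A B C : ℝ} (hA : 0 ≤ A) :
    ConvexOn ℝ Set.univ (fun x => A * x ^ 2 + B * x + C) := by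
  refine ⟨convex_univ, fun x _ y _ a bb ha hb hab => ?_⟩
  simp only [smul_eq_mul]
  have hbb : bb = 1 - a := by linarith
  subst hbb
  nlinarith [mul_nonneg hA (mul_nonneg (mul_nonneg ha hb) (sq_nonneg (x - y)))]

/-- The two-phase objective function `F(x¹,x²,y¹,y²)` (the sum of final opinions). -/
noncomputable def twoPhaseF (n : ℕ) (θ c r s : Fin n → ℝ)
    (b : Matrix (Fin n) (Fin n) ℝ) (x1 x2 y1 y2 : Fin n → ℝ) : ℝ :=
  (∑ i, ∑ j, c i * b j i)
  + (∑ j, x2 j * (θ j / 2) * ((∑ i, c i * b j i) + r j))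
  + (∑ j, y2 j * (θ j / 2) * ((∑ i, c i * b j i) - r j))
  + (∑ i, x1 i * (θ i / 2) * (1 + c i) *
      (s i + ∑ j, (x2 j + y2 j) * (θ j / 2) * b j i))
  - (∑ i, y1 i * (θ i / 2) * (1 - c i) *
      (s i + ∑ j, (x2 j + y2 j) * (θ j / 2) * b j i))

/-- under the paper's sign assumptions, the restricted two-camp game
objective `g(k₁,l₁)` is concave in the good camp's first-phase budget `k₁` and
convex in the bad camp's first-phase budget `l₁`. -/
theorem convex_concave_two_camp_game (n : ℕ) (hn : 0 < n)
    (W : Matrix (Fin n) (Fin n) ℝ)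
    (hW : ∀ i, ∑ j, |W i j| < 1)
    (hWnonneg : ∀ i j, 0 ≤ W i j)
    (w0 θ z0 : Fin n → ℝ)
    (hw0 : ∀ i, 0 ≤ w0 i ∧ w0 i ≤ 1)
    (hθ : ∀ i, 0 ≤ θ i)
    (hz0 : ∀ i, -1 ≤ z0 i ∧ z0 i ≤ 1)
    (Δ : Matrix (Fin n) (Fin n) ℝ) (hΔ : Δ = (1 - W)⁻¹)
    (r : Fin n → ℝ) (hr : ∀ i, r i = ∑ j, Δ j i)
    (c : Fin n → ℝ) (hc : ∀ i, c i = w0 i * z0 i)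
    (b : Matrix (Fin n) (Fin n) ℝ) (hb : ∀ j i, b j i = r j * w0 j * Δ j i)
    (s : Fin n → ℝ) (hs : ∀ i, s i = ∑ j, b j i)
    (α β γ δ : Fin n) (kg kb : ℝ) (hkg : 0 < kg) (hkb : 0 < kb)
    (g : ℝ → ℝ → ℝ)
    (hg : ∀ k₁ l₁ : ℝ, g k₁ l₁ =
      twoPhaseF n θ c r s b
        (fun i => if i = α then k₁ else 0)
        (fun i => if i = β then kg - k₁ else 0)
        (fun i => if i = γ then l₁ else 0)
        (fun i => if i = δ then kb - l₁ else 0)) :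
    (∀ l₁ : ℝ, ConcaveOn ℝ Set.univ (fun k₁ => g k₁ l₁)) ∧
    (∀ k₁ : ℝ, ConvexOn ℝ Set.univ (fun l₁ => g k₁ l₁)) := by
  -- sign facts
  have hΔnn : ∀ j i, 0 ≤ Δ j i := by
    rw [hΔ]; exact aux_inv_one_sub_entry_nonneg n W hW hWnonneg
  have hrnn : ∀ i, 0 ≤ r i := fun i => by
    rw [hr]; exact Finset.sum_nonneg fun j _ => hΔnn j i
  have hbnn : ∀ j i, 0 ≤ b j i := fun j i => by
    rw [hb]; exact mul_nonneg (mul_nonneg (hrnn j) (hw0 j).1) (hΔnn j i)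
  have hcabs : ∀ i, -1 ≤ c i ∧ c i ≤ 1 := fun i => by
    rw [hc]
    obtain ⟨h1, h2⟩ := hw0 i
    obtain ⟨h3, h4⟩ := hz0 i
    constructor <;> nlinarith
  -- closed form for g
  have hgs : ∀ k₁ l₁ : ℝ, g k₁ l₁ =
      (∑ i, ∑ j, c i * b j i)
      + (kg - k₁) * (θ β / 2) * ((∑ i, c i * b β i) + r β)
      + (kb - l₁) * (θ δ / 2) * ((∑ i, c i * b δ i) - r δ)
      + k₁ * (θ α / 2) * (1 + c α) *
          (s α + ((kg - k₁) * (θ β / 2) * b β α + (kb - l₁) * (θ δ / 2) * b δ α))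
      - l₁ * (θ γ / 2) * (1 - c γ) *
          (s γ + ((kg - k₁) * (θ β / 2) * b β γ + (kb - l₁) * (θ δ / 2) * b δ γ)) := by
    intro k₁ l₁
    rw [hg, twoPhaseF]
    simp only [add_mul, ite_mul, zero_mul, Finset.sum_add_distrib, Finset.sum_ite_eq',
      Finset.mem_univ, if_true]
  constructor
  · intro l₁
    have hA : (g 1 l₁ + g (-1) l₁) / 2 - g 0 l₁ =
        -((θ α / 2) * (1 + c α) * ((θ β / 2) * b β α)) := by
      rw [hgs, hgs, hgs]; ring
    have hf : (fun k₁ => g k₁ l₁) =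
        fun x => ((g 1 l₁ + g (-1) l₁) / 2 - g 0 l₁) * x ^ 2
          + ((g 1 l₁ - g (-1) l₁) / 2) * x + g 0 l₁ := by
      funext x
      rw [hgs x l₁, hgs 1 l₁, hgs (-1) l₁, hgs 0 l₁]; ring
    rw [hf]
    refine aux_concaveOn_quadratic ?_
    rw [hA, neg_nonpos]
    have h1 : (0:ℝ) ≤ 1 + c α := by linarith [(hcabs α).1]
    exact mul_nonneg (mul_nonneg (by linarith [hθ α] : (0:ℝ) ≤ θ α / 2) h1)
      (mul_nonneg (by linarith [hθ β] : (0:ℝ) ≤ θ β / 2) (hbnn β α))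
  · intro k₁
    have hA : (g k₁ 1 + g k₁ (-1)) / 2 - g k₁ 0 =
        (θ γ / 2) * (1 - c γ) * ((θ δ / 2) * b δ γ) := by
      rw [hgs, hgs, hgs]; ring
    have hf : (fun l₁ => g k₁ l₁) =
        fun x => ((g k₁ 1 + g k₁ (-1)) / 2 - g k₁ 0) * x ^ 2
          + ((g k₁ 1 - g k₁ (-1)) / 2) * x + g k₁ 0 := by
      funext x
      rw [hgs k₁ x, hgs k₁ 1, hgs k₁ (-1), hgs k₁ 0]; ring
    rw [hf]
    refine aux_convexOn_quadratic ?_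
    rw [hA]
    have h1 : (0:ℝ) ≤ 1 - c γ := by linarith [(hcabs γ).2]
    exact mul_nonneg (mul_nonneg (by linarith [hθ γ] : (0:ℝ) ≤ θ γ / 2) h1)
      (mul_nonneg (by linarith [hθ δ] : (0:ℝ) ≤ θ δ / 2) (hbnn δ γ))
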